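/- Fix a natural number s, and let q_s(z) = ∑_{n ≥ 2s+1} t_n^{(s)} z^n as a formal power series in z over ℚ, where t_n^{(s)} = T_n^{(s)}(1) are the incomplete tribonacci numbers. Then (1 − z)^{s+1} · (1 − z − z^2 − z^3) · q_s(z) = z^{2s+1} · [ ( t_{2s+1} + (t_{2s-1} + t_{2s}) z + t_{2s} z^2 ) · (1 − z)^{s+1} − z^2 (1 + z)^{s+1} ], where t_{-1} is interpreted as 0 (needed when s = 0). -/

import Mathlib

open PowerSeries

/-- The tribonacci numbers: `t 0 = 0`, `t 1 = t 2 = 1`,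
`t (n+3) = t (n+2) + t (n+1) + t n`. -/
def trib : ℕ → ℚ
  | 0 => 0
  | 1 => 1
  | 2 => 1
  | (n + 3) => trib (n + 2) + trib (n + 1) + trib n

/-- The incomplete tribonacci number `t_n^{(s)}`, for subscript `n ≥ 1`:
`t_{n+1}^{(s)} = ∑_{i=0}^{s} ∑_{j=0}^{i} C(i,j) C(n-i-j, i)`. -/
def incTribNum (n s : ℕ) : ℚ :=
  ∑ i ∈ Finset.range (s + 1), ∑ j ∈ Finset.range (i + 1),
    (Nat.choose i j : ℚ) * (Nat.choose (n - 1 - i - j) i : ℚ)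

private lemma trib_rec (n : ℕ) : trib (n+2) = trib (n+1) + trib n + trib (n-1) := by
  match n with
  | 0 => simp [trib]
  | (m+1) => rfl

private lemma pascal_step (i : ℕ) :
    (1 - (X : PowerSeries ℚ)) * PowerSeries.mk (fun n => ((n.choose (i+1) : ℕ) : ℚ)) =
      X * PowerSeries.mk (fun n => ((n.choose i : ℕ) : ℚ)) := by
  ext n
  rw [sub_mul, one_mul, map_sub]
  cases n with
  | zero => simp
  | succ m =>
      simp [coeff_succ_X_mul, coeff_mk, Nat.choose_succ_succ]

private lemma choose_series (i : ℕ) :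
    (1 - (X : PowerSeries ℚ)) ^ (i+1) * PowerSeries.mk (fun n => ((n.choose i : ℕ) : ℚ)) =
      X ^ i := by
  induction i with
  | zero =>
      ext n
      rw [pow_one, sub_mul, one_mul, map_sub]
      cases n with
      | zero => simp
      | succ m => simp [coeff_succ_X_mul, coeff_mk]
  | succ k ih =>
      rw [pow_succ, mul_assoc, pascal_step, ← mul_assoc, mul_comm _ (X : PowerSeries ℚ),
        mul_assoc, mul_comm (X : PowerSeries ℚ)]
      rw [show (1 - (X : PowerSeries ℚ)) ^ (k+1) * PowerSeries.mk (fun n => ((n.choose k : ℕ) : ℚ)) * X = X ^ k * X from by rw [ih]]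
      rw [← pow_succ]

private lemma incTribNum_zero (s : ℕ) : incTribNum 0 s = 1 := by
  rw [incTribNum]
  rw [Finset.sum_eq_single_of_mem 0 (Finset.mem_range.2 (Nat.succ_pos s))]
  · simp
  · intro i _ hi
    apply Finset.sum_eq_zero
    intro j _
    rw [show (0:ℕ) - 1 - i - j = 0 from by omega,
      Nat.choose_eq_zero_of_lt (Nat.pos_of_ne_zero hi)]
    simp

private lemma Fs_eq (s : ℕ) :
    PowerSeries.mk (fun n => incTribNum n s) =
      1 + ∑ i ∈ Finset.range (s+1), ∑ j ∈ Finset.range (i+1),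
        PowerSeries.C ((i.choose j : ℕ) : ℚ) *
          (X ^ (1+i+j) * PowerSeries.mk (fun n => ((n.choose i : ℕ) : ℚ))) := by
  ext n
  rw [map_add, coeff_mk]
  simp only [map_sum, coeff_C_mul, coeff_X_pow_mul']
  rcases Nat.eq_zero_or_pos n with rfl | hn
  · rw [incTribNum_zero]
    simp
  · rw [PowerSeries.coeff_one, if_neg (by omega), zero_add, incTribNum]
    apply Finset.sum_congr rfl
    intro i _
    apply Finset.sum_congr rfl
    intro j hj
    have hj' : j ≤ i := Nat.lt_succ_iff.1 (Finset.mem_range.1 hj)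
    congr 1
    rw [coeff_mk]
    split_ifs with h
    · rw [show n - 1 - i - j = n - (1+i+j) from by omega]
    · have hi : 1 ≤ i := by omega
      rw [show n - 1 - i - j = 0 from by omega, Nat.choose_eq_zero_of_lt hi]
      simp

private lemma h1 (s : ℕ) :
    (1 - (X:PowerSeries ℚ))^(s+1) * PowerSeries.mk (fun n => incTribNum n s)
      = (1-X)^(s+1) + X * ∑ i ∈ Finset.range (s+1), (X^2*(1+X))^i * (1-X)^(s-i) := by
  rw [Fs_eq, mul_add, mul_one, Finset.mul_sum, Finset.mul_sum]
  congr 1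
  apply Finset.sum_congr rfl
  intro i hi
  have hi' : i ≤ s := Nat.lt_succ_iff.1 (Finset.mem_range.1 hi)
  rw [Finset.mul_sum]
  have expand : ∀ j ∈ Finset.range (i+1),
      (1 - (X:PowerSeries ℚ))^(s+1) *
        (PowerSeries.C ((i.choose j : ℕ) : ℚ) *
          (X ^ (1+i+j) * PowerSeries.mk (fun n => ((n.choose i : ℕ) : ℚ)))) =
      X * ((X^2)^i * (1-X)^(s-i)) * (PowerSeries.C ((i.choose j : ℕ) : ℚ) * X ^ j) := by
    intro j _
    have hsplit : (1 - (X:PowerSeries ℚ))^(s+1) = (1-X)^(s-i) * (1-X)^(i+1) := by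
      rw [← pow_add]
      congr 1
      omega
    rw [hsplit]
    rw [show (1 - (X:PowerSeries ℚ))^(s-i) * (1-X)^(i+1) *
        (PowerSeries.C ((i.choose j : ℕ) : ℚ) *
          (X ^ (1+i+j) * PowerSeries.mk (fun n => ((n.choose i : ℕ) : ℚ)))) =
      (1-X)^(s-i) * PowerSeries.C ((i.choose j : ℕ) : ℚ) * X ^ (1+i+j) *
        ((1-X)^(i+1) * PowerSeries.mk (fun n => ((n.choose i : ℕ) : ℚ))) from by ring]
    rw [choose_series]
    rw [show 1+i+j = (1 + i) + j from rfl, pow_add, pow_add, pow_one]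
    ring
  rw [Finset.sum_congr rfl expand, ← Finset.mul_sum]
  have hbin : ∑ j ∈ Finset.range (i+1), PowerSeries.C ((i.choose j : ℕ) : ℚ) * X ^ j
      = (1 + X)^i := by
    rw [add_comm (1 : PowerSeries ℚ) X, add_pow]
    apply Finset.sum_congr rfl
    intro j _
    rw [one_pow, mul_one, map_natCast]
    ring
  rw [hbin, mul_pow]
  ring

private lemma key (s : ℕ) :
    (1 - (X:PowerSeries ℚ))^(s+1) *
        ((1 - X - X^2 - X^3) * PowerSeries.mk (fun n => incTribNum n s)) =
      (1-X)^(s+1) * (1 - X^2 - X^3) - X^(2*s+3) * (1+X)^(s+1) := by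
  have hg := geom_sum₂_mul ((X:PowerSeries ℚ)^2*(1+X)) (1-X) (s+1)
  have hsum : ∀ i ∈ Finset.range (s+1),
      ((X:PowerSeries ℚ)^2*(1+X))^i * (1-X)^(s+1-1-i)
        = ((X:PowerSeries ℚ)^2*(1+X))^i * (1-X)^(s-i) := by
    intro i _
    norm_num
  rw [Finset.sum_congr rfl hsum] at hg
  calc (1 - (X:PowerSeries ℚ))^(s+1) *
        ((1 - X - X^2 - X^3) * PowerSeries.mk (fun n => incTribNum n s))
      = (1 - X - X^2 - X^3) *
          ((1 - (X:PowerSeries ℚ))^(s+1) * PowerSeries.mk (fun n => incTribNum n s)) := by ring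
    _ = (1 - X - X^2 - X^3) * ((1-X)^(s+1)
          + X * ∑ i ∈ Finset.range (s+1), (X^2*(1+X))^i * (1-X)^(s-i)) := by rw [h1]
    _ = (1 - X - X^2 - X^3) * (1-X)^(s+1)
          - X * ((∑ i ∈ Finset.range (s+1), (X^2*(1+X))^i * (1-X)^(s-i)) *
              ((X^2*(1+X)) - (1-X))) := by ring
    _ = (1 - X - X^2 - X^3) * (1-X)^(s+1)
          - X * ((X^2*(1+X))^(s+1) - (1-X)^(s+1)) := by rw [hg]
    _ = (1-X)^(s+1) * (1 - X^2 - X^3) - X^(2*s+3) * (1+X)^(s+1) := by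
        have hx : (X:PowerSeries ℚ)^(2*s+3) = ((X:PowerSeries ℚ)^2)^(s+1) * X := by
          rw [← pow_mul, ← pow_succ, show 2*(s+1)+1 = 2*s+3 from by ring]
        rw [hx, mul_pow]
        ring

private lemma coeff_lowmul (f : PowerSeries ℚ) (k m : ℕ) :
    (PowerSeries.coeff m) ((X:PowerSeries ℚ)^k * f) =
      if k ≤ m then (PowerSeries.coeff (m - k)) f else 0 :=
  PowerSeries.coeff_X_pow_mul' f k m

private lemma hrec (s : ℕ) (m : ℕ) (hm : m < 2*s+3) :
    incTribNum m s
      - (if 1 ≤ m then incTribNum (m-1) s else 0)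
      - (if 2 ≤ m then incTribNum (m-2) s else 0)
      - (if 3 ≤ m then incTribNum (m-3) s else 0)
      = (PowerSeries.coeff m) (1 - X^2 - X^3 : PowerSeries ℚ) := by
  have hu : IsUnit ((1 - (X:PowerSeries ℚ))^(s+1)) := by
    apply IsUnit.pow
    rw [PowerSeries.isUnit_iff_constantCoeff]
    simp
  have hdvd : (X:PowerSeries ℚ)^(2*s+3) ∣
      ((1 - X - X^2 - X^3) * PowerSeries.mk (fun n => incTribNum n s) - (1 - X^2 - X^3)) := by
    have h2 : (1 - (X:PowerSeries ℚ))^(s+1) *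
        ((1 - X - X^2 - X^3) * PowerSeries.mk (fun n => incTribNum n s) - (1 - X^2 - X^3)) =
        - (X^(2*s+3) * (1+X)^(s+1)) := by
      rw [mul_sub, key]
      ring
    have : (X:PowerSeries ℚ)^(2*s+3) ∣ (1 - (X:PowerSeries ℚ))^(s+1) *
        ((1 - X - X^2 - X^3) * PowerSeries.mk (fun n => incTribNum n s) - (1 - X^2 - X^3)) := by
      rw [h2]
      exact (Dvd.intro _ rfl).neg_right
    exact (IsUnit.dvd_mul_left hu).1 this
  have hc := (PowerSeries.X_pow_dvd_iff.1 hdvd) m hm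
  rw [map_sub] at hc
  have hexp : (PowerSeries.coeff m)
      ((1 - X - X^2 - X^3 : PowerSeries ℚ) * PowerSeries.mk (fun n => incTribNum n s)) =
      incTribNum m s
      - (if 1 ≤ m then incTribNum (m-1) s else 0)
      - (if 2 ≤ m then incTribNum (m-2) s else 0)
      - (if 3 ≤ m then incTribNum (m-3) s else 0) := by
    rw [sub_mul, sub_mul, sub_mul, one_mul, map_sub, map_sub, map_sub]
    rw [show (X:PowerSeries ℚ) * PowerSeries.mk (fun n => incTribNum n s)
        = X^1 * PowerSeries.mk (fun n => incTribNum n s) from by rw [pow_one]]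
    rw [coeff_lowmul, coeff_lowmul, coeff_lowmul, coeff_mk]
    simp only [coeff_mk]
  rw [hexp] at hc
  linarith [hc]

private lemma inc_eq_trib (s : ℕ) : ∀ n, 1 ≤ n → n ≤ 2*s+2 → incTribNum n s = trib n := by
  intro n
  induction n using Nat.strong_induction_on with
  | _ n ih =>
    intro h1 h2
    match n with
    | 1 =>
        have h := hrec s 1 (by omega)
        have e : (PowerSeries.coeff 1) (1 - X^2 - X^3 : PowerSeries ℚ) = 0 := by
          rw [map_sub, map_sub, PowerSeries.coeff_one, PowerSeries.coeff_X_pow,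
            PowerSeries.coeff_X_pow]
          norm_num
        rw [e] at h
        norm_num [incTribNum_zero] at h
        rw [show trib 1 = 1 from rfl]
        linarith
    | 2 =>
        have h := hrec s 2 (by omega)
        have e : (PowerSeries.coeff 2) (1 - X^2 - X^3 : PowerSeries ℚ) = -1 := by
          rw [map_sub, map_sub, PowerSeries.coeff_one, PowerSeries.coeff_X_pow,
            PowerSeries.coeff_X_pow]
          norm_num
        rw [e] at h
        norm_num [incTribNum_zero] at h
        rw [ih 1 (by omega) (by omega) (by omega), show trib 1 = 1 from rfl] at h
        rw [show trib 2 = 1 from rfl]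
        linarith
    | 3 =>
        have h := hrec s 3 (by omega)
        have e : (PowerSeries.coeff 3) (1 - X^2 - X^3 : PowerSeries ℚ) = -1 := by
          rw [map_sub, map_sub, PowerSeries.coeff_one, PowerSeries.coeff_X_pow,
            PowerSeries.coeff_X_pow]
          norm_num
        rw [e] at h
        norm_num [incTribNum_zero] at h
        rw [ih 2 (by omega) (by omega) (by omega), show trib 2 = 1 from rfl,
          ih 1 (by omega) (by omega) (by omega), show trib 1 = 1 from rfl] at h
        rw [show trib 3 = 2 from by norm_num [trib]]
        linarith
    | (m+4) =>
        have h := hrec s (m+4) (by omega)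
        have e3 : (PowerSeries.coeff (m+4)) (1 - X^2 - X^3 : PowerSeries ℚ) = 0 := by
          rw [map_sub, map_sub, PowerSeries.coeff_one, PowerSeries.coeff_X_pow,
            PowerSeries.coeff_X_pow]
          rw [if_neg (by omega : ¬(m+4=0)), if_neg (by omega : ¬(m+4=2)),
            if_neg (by omega : ¬(m+4=3))]
          ring
        rw [e3, if_pos (by omega), if_pos (by omega), if_pos (by omega)] at h
        have r1 : m + 4 - 1 = m + 3 := rfl
        have r2 : m + 4 - 2 = m + 2 := rfl
        have r3 : m + 4 - 3 = m + 1 := rfl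
        rw [r1, r2, r3] at h
        rw [ih (m+3) (by omega) (by omega) (by omega), ih (m+2) (by omega) (by omega) (by omega),
          ih (m+1) (by omega) (by omega) (by omega)] at h
        have : incTribNum (m+4) s = trib (m+3) + trib (m+2) + trib (m+1) := by linarith
        rw [this, show trib (m+4) = trib (m+3) + trib (m+2) + trib (m+1) from rfl]

private lemma partial_sum (N : ℕ) :
    (1 - X - X^2 - X^3 : PowerSeries ℚ) *
        ∑ n ∈ Finset.range (N+1), PowerSeries.C (trib n) * X^n =
      X - X^(N+1) * (PowerSeries.C (trib (N+1)) + PowerSeries.C (trib (N-1) + trib N) * X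
        + PowerSeries.C (trib N) * X^2) := by
  induction N with
  | zero =>
      norm_num [trib]
  | succ M ih =>
      rw [Finset.sum_range_succ, mul_add, ih]
      have hM1 : M + 1 - 1 = M := rfl
      have hM2 : trib (M+2) = trib (M+1) + trib M + trib (M-1) := trib_rec M
      rw [hM1, hM2]
      rw [show (M+1)+1 = M+2 from rfl]
      simp only [map_add, pow_succ]
      ring

private lemma hq (s : ℕ) :
    PowerSeries.mk (fun n => if 2*s+1 ≤ n then incTribNum n s else 0)
      = PowerSeries.mk (fun n => incTribNum n s)
        - (1 + ∑ n ∈ Finset.range (2*s+1), PowerSeries.C (trib n) * X^n) := by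
  ext m
  rw [map_sub, map_add, coeff_mk, coeff_mk, map_sum]
  simp only [PowerSeries.coeff_C_mul, PowerSeries.coeff_X_pow, mul_ite, mul_one, mul_zero,
    PowerSeries.coeff_one]
  rw [Finset.sum_ite_eq (Finset.range (2*s+1)) m (fun n => trib n)]
  simp only [Finset.mem_range]
  rcases Nat.eq_zero_or_pos m with rfl | hm
  · rw [if_neg (show ¬ 2*s+1 ≤ 0 by omega), if_pos rfl, if_pos (show 0 < 2*s+1 by omega),
      incTribNum_zero, show trib 0 = 0 from rfl]
    norm_num
  · rw [if_neg (show ¬ m = 0 by omega)]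
    by_cases hle : 2*s+1 ≤ m
    · rw [if_pos hle, if_neg (show ¬ m < 2*s+1 by omega)]
      ring
    · rw [if_neg hle, if_pos (show m < 2*s+1 by omega), inc_eq_trib s m hm (by omega)]
      ring

/-- Generating function for the incomplete tribonacci numbers
`q_s(z) = ∑_{n ≥ 2s+1} t_n^{(s)} zⁿ`:
`(1 − z)^{s+1} (1 − z − z² − z³) q_s(z)
 = z^{2s+1} [(t_{2s+1} + (t_{2s-1} + t_{2s}) z + t_{2s} z²)(1 − z)^{s+1} − z² (1+z)^{s+1}]`.
The convention `t_{-1} = 0` (needed for `t_{2s-1}` when `s = 0`) agrees with truncated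
natural subtraction since `trib 0 = 0`. -/
theorem incTribNum_generating_function (s : ℕ) :
    (1 - (X : PowerSeries ℚ)) ^ (s + 1) *
        ((1 - X - X ^ 2 - X ^ 3) *
          PowerSeries.mk (fun n => if 2 * s + 1 ≤ n then incTribNum n s else 0)) =
      (X : PowerSeries ℚ) ^ (2 * s + 1) *
        ((PowerSeries.C (trib (2 * s + 1)) +
            PowerSeries.C (trib (2 * s - 1) + trib (2 * s)) * X +
            PowerSeries.C (trib (2 * s)) * X ^ 2) *
          (1 - X) ^ (s + 1) - X ^ 2 * (1 + X) ^ (s + 1)) := by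
  rw [hq]
  have hps := partial_sum (2*s)
  have hkey := key s
  rw [mul_sub, mul_sub, mul_add, mul_one]
  rw [hkey]
  rw [show (1 - X - X ^ 2 - X ^ 3 : PowerSeries ℚ) *
      ∑ n ∈ Finset.range (2*s+1), PowerSeries.C (trib n) * X^n =
      X - X^(2*s+1) * (PowerSeries.C (trib (2*s+1)) + PowerSeries.C (trib (2*s-1) + trib (2*s)) * X
        + PowerSeries.C (trib (2*s)) * X^2) from hps]
  rw [show (2*s+3) = (2*s+1)+2 from by ring, pow_add]
  ring
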